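/- Let n ≥ 1, let Ω ⊂ ℝⁿ be a bounded open set, and let 1 < p < ∞ be a real number. There exists a constant C > 0, depending only on Ω and p (and in particular independent of s and of i), such that for every s ∈ (0,1), every i ∈ {1,…,n}, and every measurable function u : ℝⁿ → ℝ with u = 0 almost everywhere on ℝⁿ \ Ω, one has ∫_{ℝⁿ} |u(x)|^p dx ≤ C · ∫_{ℝⁿ} ∫_{ℝ} |u(x + h·eᵢ) − u(x)|^p / |h|^{1+sp} dh dx, where both sides are interpreted as (possibly infinite) Lebesgue integrals with values in [0,∞]. -/
import Mathlib


open MeasureTheory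

/-- Directional fractional Poincaré inequality on a bounded open set, with a constant
independent of `s ∈ (0,1)` and of the coordinate direction `i`. -/
theorem fractional_poincare_bounded (n : ℕ) (hn : 1 ≤ n) (Ω : Set (Fin n → ℝ))
    (hΩopen : IsOpen Ω) (hΩbdd : Bornology.IsBounded Ω) (p : ℝ) (hp : 1 < p) :
    ∃ C : ℝ, 0 < C ∧
      ∀ (s : ℝ), 0 < s → s < 1 →
        ∀ (i : Fin n) (u : (Fin n → ℝ) → ℝ), Measurable u →
          (∀ᵐ x : Fin n → ℝ, x ∉ Ω → u x = 0) →
          (∫⁻ x : Fin n → ℝ, ENNReal.ofReal (|u x| ^ p)) ≤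
            ENNReal.ofReal C *
              ∫⁻ x : Fin n → ℝ, ∫⁻ h : ℝ,
                ENNReal.ofReal
                  (|u (x + h • (Pi.single i 1 : Fin n → ℝ)) - u x| ^ p /
                    |h| ^ (1 + s * p)) := by
  obtain ⟨r, hr⟩ := hΩbdd.subset_closedBall 0
  set R : ℝ := max r 1 with hRdef
  have hR1 : (1 : ℝ) ≤ R := le_max_right _ _
  have hR0 : (0 : ℝ) < R := lt_of_lt_of_le one_pos hR1
  have hΩR : ∀ x ∈ Ω, ‖x‖ ≤ R := by
    intro x hx
    have := hr hx
    rw [Metric.mem_closedBall, dist_zero_right] at this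
    exact this.trans (le_max_left _ _)
  have h4R1 : (1 : ℝ) ≤ 4 * R := by nlinarith
  have h4R0 : (0 : ℝ) < 4 * R := by linarith
  have hBpos : (0 : ℝ) < (4 * R) ^ (1 + p) := Real.rpow_pos_of_pos h4R0 _
  refine ⟨(4 * R) ^ (1 + p) / R, by positivity, ?_⟩
  intro s hs0 hs1 i u hu hu0
  set e : Fin n → ℝ := Pi.single i 1 with he
  set k : ℝ := ((4 * R) ^ (1 + p))⁻¹ with hk
  have hkpos : 0 < k := by positivity
  set L : ENNReal := ∫⁻ x : Fin n → ℝ, ENNReal.ofReal (|u x| ^ p) with hL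
  set F : (Fin n → ℝ) → ℝ → ENNReal := fun x h =>
    ENNReal.ofReal (|u (x + h • e) - u x| ^ p / |h| ^ (1 + s * p)) with hF
  have hFmeas : Measurable (Function.uncurry F) := by
    rw [hF]; unfold Function.uncurry; fun_prop
  -- pointwise lower bound for fixed h ∈ [3R, 4R]
  have inner : ∀ h ∈ Set.Icc (3 * R) (4 * R),
      ENNReal.ofReal k * L ≤ ∫⁻ x : Fin n → ℝ, F x h := by
    intro h hh
    obtain ⟨hh1, hh2⟩ := hh
    have hhpos : 0 < h := by nlinarith
    have hmp : MeasurePreserving (fun x : Fin n → ℝ => x + h • e) volume volume :=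
      measurePreserving_add_right volume (h • e)
    have hA : ∀ᵐ x : Fin n → ℝ, (x + h • e) ∉ Ω → u (x + h • e) = 0 :=
      hmp.quasiMeasurePreserving.tendsto_ae.eventually hu0
    have hbd : ∀ᵐ x : Fin n → ℝ,
        ENNReal.ofReal k * ENNReal.ofReal (|u x| ^ p) ≤ F x h := by
      filter_upwards [hu0, hA] with x hx hxA
      simp only [hF]
      by_cases hxΩ : x ∈ Ω
      · have hout : x + h • e ∉ Ω := by
          intro hmem
          have h1 : |(x + h • e) i| ≤ R := by
            have := (norm_le_pi_norm (x + h • e) i).trans (hΩR _ hmem)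
            simpa using this
          have h2 : (x + h • e) i = x i + h := by
            simp [he, Pi.single_eq_same]
          have h3 : |x i| ≤ R := by
            have := (norm_le_pi_norm x i).trans (hΩR _ hxΩ)
            simpa using this
          rw [h2] at h1
          have := abs_le.1 h1
          have := abs_le.1 h3
          linarith [this.1, this.2]
        rw [hxA hout, zero_sub, abs_neg]
        have hhexp : |h| ^ (1 + s * p) ≤ (4 * R) ^ (1 + p) := by
          rw [abs_of_pos hhpos]
          calc h ^ (1 + s * p) ≤ (4 * R) ^ (1 + s * p) :=
                Real.rpow_le_rpow hhpos.le hh2 (by nlinarith)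
            _ ≤ (4 * R) ^ (1 + p) :=
                Real.rpow_le_rpow_of_exponent_le h4R1 (by nlinarith)
        have hhexpos : 0 < |h| ^ (1 + s * p) :=
          Real.rpow_pos_of_pos (abs_pos.2 hhpos.ne') _
        rw [← ENNReal.ofReal_mul hkpos.le]
        apply ENNReal.ofReal_le_ofReal
        have hann : (0 : ℝ) ≤ |u x| ^ p := Real.rpow_nonneg (abs_nonneg _) _
        calc k * |u x| ^ p = |u x| ^ p / (4 * R) ^ (1 + p) := by
              rw [hk]; ring
          _ ≤ |u x| ^ p / |h| ^ (1 + s * p) :=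
              div_le_div_of_nonneg_left hann hhexpos hhexp
      · have hux : u x = 0 := hx hxΩ
        simp [hux, Real.zero_rpow (by positivity : p ≠ 0)]
    calc ENNReal.ofReal k * L
        = ∫⁻ x : Fin n → ℝ, ENNReal.ofReal k * ENNReal.ofReal (|u x| ^ p) := by
          rw [hL, lintegral_const_mul' _ _ ENNReal.ofReal_ne_top]
      _ ≤ ∫⁻ x : Fin n → ℝ, F x h := lintegral_mono_ae hbd
  -- assemble
  have hswap : (∫⁻ x : Fin n → ℝ, ∫⁻ h : ℝ, F x h) = ∫⁻ h : ℝ, ∫⁻ x : Fin n → ℝ, F x h :=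
    lintegral_lintegral_swap hFmeas.aemeasurable
  have hD : ENNReal.ofReal R * (ENNReal.ofReal k * L) ≤
      ∫⁻ x : Fin n → ℝ, ∫⁻ h : ℝ, F x h := by
    rw [hswap]
    calc ENNReal.ofReal R * (ENNReal.ofReal k * L)
        = ∫⁻ h in Set.Icc (3 * R) (4 * R), (ENNReal.ofReal k * L) := by
          rw [setLIntegral_const, Real.volume_Icc]
          rw [show 4 * R - 3 * R = R by ring, mul_comm]
      _ ≤ ∫⁻ h in Set.Icc (3 * R) (4 * R), ∫⁻ x : Fin n → ℝ, F x h :=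
          setLIntegral_mono' measurableSet_Icc inner
      _ ≤ ∫⁻ h : ℝ, ∫⁻ x : Fin n → ℝ, F x h := setLIntegral_le_lintegral _ _
  calc L = ENNReal.ofReal ((4 * R) ^ (1 + p) / R) *
        (ENNReal.ofReal R * (ENNReal.ofReal k * L)) := by
        rw [← mul_assoc, ← mul_assoc, ← ENNReal.ofReal_mul (by positivity),
          ← ENNReal.ofReal_mul (by positivity)]
        rw [show (4 * R) ^ (1 + p) / R * R * k = 1 by
          rw [hk]; field_simp]
        simp
    _ ≤ ENNReal.ofReal ((4 * R) ^ (1 + p) / R) *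
          ∫⁻ x : Fin n → ℝ, ∫⁻ h : ℝ, F x h := mul_le_mul_right hD _
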